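/- arXiv:1108.5356 — 5 statements merged into one kernel-verified Lean document; each statement's English description precedes it below -/
import Mathlib

section
/- For l ≥ 1, the Lambert series T_l(λ) = ∑_{i≥1} i^l λ^i/(1-λ^i) satisfies T_l(λ) ~ l! ζ(l+1)/(1-λ)^{l+1} as λ → 1⁻, i.e. lim_{λ→1⁻} (1-λ)^{l+1} T_l(λ) = l! ζ(l+1). -/
open Filter

lemma choose_hasSum (l : ℕ) {x : ℝ} (hx0 : 0 ≤ x) (hx1 : x < 1) :
    HasSum (fun j : ℕ => (((j + l).choose l : ℕ) : ℝ) * x ^ j) (((1 - x) ^ (l + 1))⁻¹) := by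
  induction l with
  | zero => simpa using hasSum_geometric_of_lt_one hx0 hx1
  | succ l ih =>
    have hg : HasSum (fun j : ℕ => x ^ j) ((1 - x)⁻¹) := hasSum_geometric_of_lt_one hx0 hx1
    have hfn : Summable fun j : ℕ => ‖(((j + l).choose l : ℕ) : ℝ) * x ^ j‖ := by
      refine ih.summable.congr fun j => ?_
      rw [Real.norm_of_nonneg (by positivity)]
    have hgn : Summable fun j : ℕ => ‖x ^ j‖ := by
      refine hg.summable.congr fun j => ?_
      rw [Real.norm_of_nonneg (by positivity)]
    have key := hasSum_sum_range_mul_of_summable_norm hfn hgn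
    rw [ih.tsum_eq, hg.tsum_eq] at key
    have heq : (fun n : ℕ => ∑ k ∈ Finset.range (n + 1),
        (((k + l).choose l : ℕ) : ℝ) * x ^ k * x ^ (n - k))
        = fun n : ℕ => (((n + (l + 1)).choose (l + 1) : ℕ) : ℝ) * x ^ n := by
      funext n
      have h1 : ∀ k ∈ Finset.range (n + 1), (((k + l).choose l : ℕ) : ℝ) * x ^ k * x ^ (n - k)
          = (((k + l).choose l : ℕ) : ℝ) * x ^ n := by
        intro k hk
        rw [Finset.mem_range] at hk
        rw [mul_assoc, ← pow_add]
        congr 2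
        omega
      rw [Finset.sum_congr rfl h1, ← Finset.sum_mul, ← Nat.cast_sum, Nat.sum_range_add_choose n l, ← add_assoc]
    rw [heq] at key
    convert key using 1
    rfl
    rw [← mul_inv, ← pow_succ]

lemma pow_le_factorial_mul_choose (l i : ℕ) :
    (i + 1) ^ l ≤ l.factorial * (i + l).choose l := by
  induction l with
  | zero => simp
  | succ l ih =>
    have pas : (i + l + 1) * (i + l).choose l = (i + l + 1).choose (l + 1) * (l + 1) :=
      Nat.add_one_mul_choose_eq (i + l) l
    calc (i + 1) ^ (l + 1) = (i + 1) ^ l * (i + 1) := by ring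
      _ ≤ l.factorial * (i + l).choose l * (i + l + 1) := by
          exact Nat.mul_le_mul ih (by omega)
      _ = l.factorial * ((i + l + 1).choose (l + 1) * (l + 1)) := by
          rw [mul_assoc, mul_comm ((i+l).choose l), pas]
      _ = (l + 1).factorial * (i + (l + 1)).choose (l + 1) := by
          rw [Nat.factorial_succ, ← add_assoc]
          ring

lemma F_summable (l : ℕ) {x : ℝ} (hx : |x| < 1) :
    Summable (fun i : ℕ => ((i + 1 : ℕ) : ℝ) ^ l * x ^ (i + 1)) := by
  have h := summable_pow_mul_geometric_of_norm_lt_one (R := ℝ) l (by rwa [Real.norm_eq_abs])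
  have h2 := (summable_nat_add_iff 1).2 h
  refine h2.congr fun i => ?_
  push_cast
  ring

lemma F_upper (l : ℕ) {x : ℝ} (hx0 : 0 ≤ x) (hx1 : x < 1) :
    (∑' i : ℕ, ((i + 1 : ℕ) : ℝ) ^ l * x ^ (i + 1))
      ≤ (l.factorial : ℝ) * x / (1 - x) ^ (l + 1) := by
  have habs : |x| < 1 := abs_lt.2 ⟨by linarith, hx1⟩
  have hC := choose_hasSum l hx0 hx1
  have h1 : ∀ i : ℕ, ((i + 1 : ℕ) : ℝ) ^ l * x ^ (i + 1)
      ≤ x * ((l.factorial : ℝ) * ((((i + l).choose l : ℕ) : ℝ) * x ^ i)) := by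
    intro i
    have hnat : (((i + 1) ^ l : ℕ) : ℝ) ≤ ((l.factorial * (i + l).choose l : ℕ) : ℝ) :=
      Nat.cast_le.2 (pow_le_factorial_mul_choose l i)
    push_cast at hnat
    calc ((i + 1 : ℕ) : ℝ) ^ l * x ^ (i + 1) = (((i : ℝ) + 1) ^ l) * (x ^ i * x) := by
          push_cast; ring
      _ ≤ ((l.factorial : ℝ) * (((i + l).choose l : ℕ) : ℝ)) * (x ^ i * x) :=
          mul_le_mul_of_nonneg_right hnat (by positivity)
      _ = x * ((l.factorial : ℝ) * ((((i + l).choose l : ℕ) : ℝ) * x ^ i)) := by ring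
  have hs2 : Summable fun i : ℕ =>
      x * ((l.factorial : ℝ) * ((((i + l).choose l : ℕ) : ℝ) * x ^ i)) :=
    (hC.summable.mul_left _).mul_left _
  calc (∑' i : ℕ, ((i + 1 : ℕ) : ℝ) ^ l * x ^ (i + 1))
      ≤ ∑' i : ℕ, x * ((l.factorial : ℝ) * ((((i + l).choose l : ℕ) : ℝ) * x ^ i)) :=
        Summable.tsum_le_tsum h1 (F_summable l habs) hs2
    _ = x * ((l.factorial : ℝ) * ((1 - x) ^ (l + 1))⁻¹) := by
        rw [tsum_mul_left, tsum_mul_left, hC.tsum_eq]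
    _ = (l.factorial : ℝ) * x / (1 - x) ^ (l + 1) := by
        rw [div_eq_mul_inv]; ring

lemma F_lower (l : ℕ) (hl : 1 ≤ l) {x : ℝ} (hx0 : 0 ≤ x) (hx1 : x < 1) :
    (l.factorial : ℝ) * x ^ l / (1 - x) ^ (l + 1)
      ≤ ∑' i : ℕ, ((i + 1 : ℕ) : ℝ) ^ l * x ^ (i + 1) := by
  have habs : |x| < 1 := abs_lt.2 ⟨by linarith, hx1⟩
  have hC := (choose_hasSum l hx0 hx1).mul_left ((l.factorial : ℝ) * x ^ l)
  have hCs : Summable fun j : ℕ =>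
      (l.factorial : ℝ) * x ^ l * ((((j + l).choose l : ℕ) : ℝ) * x ^ j) := hC.summable
  have hle : ∀ j : ℕ, (l.factorial : ℝ) * x ^ l * ((((j + l).choose l : ℕ) : ℝ) * x ^ j)
      ≤ ((j + (l - 1) + 1 : ℕ) : ℝ) ^ l * x ^ (j + (l - 1) + 1) := by
    intro j
    have hidx : j + (l - 1) + 1 = j + l := by omega
    rw [hidx]
    have hnat : l.factorial * (j + l).choose l ≤ (j + l) ^ l := by
      rw [← Nat.descFactorial_eq_factorial_mul_choose]
      exact Nat.descFactorial_le_pow _ _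
    have hcast : ((l.factorial * (j + l).choose l : ℕ) : ℝ) ≤ (((j + l) ^ l : ℕ) : ℝ) :=
      Nat.cast_le.2 hnat
    push_cast at hcast
    calc (l.factorial : ℝ) * x ^ l * ((((j + l).choose l : ℕ) : ℝ) * x ^ j)
        = ((l.factorial : ℝ) * (((j + l).choose l : ℕ) : ℝ)) * x ^ (j + l) := by
          rw [pow_add]; ring
      _ ≤ ((j : ℝ) + l) ^ l * x ^ (j + l) :=
          mul_le_mul_of_nonneg_right hcast (by positivity)
      _ = ((j + l : ℕ) : ℝ) ^ l * x ^ (j + l) := by push_cast; ring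
  have := Summable.tsum_le_tsum_of_inj (fun j : ℕ => j + (l - 1))
    (add_left_injective (l - 1))
    (fun c _ => by positivity)
    hle hCs (F_summable l habs)
  calc (l.factorial : ℝ) * x ^ l / (1 - x) ^ (l + 1)
      = (l.factorial : ℝ) * x ^ l * ((1 - x) ^ (l + 1))⁻¹ := by rw [div_eq_mul_inv]
    _ = ∑' j : ℕ, (l.factorial : ℝ) * x ^ l * ((((j + l).choose l : ℕ) : ℝ) * x ^ j) :=
        hC.tsum_eq.symm
    _ ≤ _ := this

lemma geom_tail_hasSum {r : ℝ} (h0 : 0 ≤ r) (h1 : r < 1) :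
    HasSum (fun n : ℕ => r ^ (n + 1)) (r / (1 - r)) := by
  have h := (hasSum_geometric_of_lt_one h0 h1).mul_left r
  have heq : (fun n : ℕ => r * r ^ n) = fun n : ℕ => r ^ (n + 1) := by
    funext n; rw [pow_succ]; ring
  rw [← heq]
  exact h

lemma swap_sum (l : ℕ) {lam : ℝ} (h0 : 0 < lam) (h1 : lam < 1) :
    (∑' i : ℕ, ((i + 1 : ℕ) : ℝ) ^ l * lam ^ (i + 1) / (1 - lam ^ (i + 1)))
      = ∑' n : ℕ, ∑' i : ℕ, ((i + 1 : ℕ) : ℝ) ^ l * (lam ^ (n + 1)) ^ (i + 1) := by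
  set f : ℕ → ℕ → ℝ := fun n i => ((i + 1 : ℕ) : ℝ) ^ l * (lam ^ (n + 1)) ^ (i + 1) with hf
  have hpow : ∀ k : ℕ, 0 < lam ^ (k + 1) ∧ lam ^ (k + 1) < 1 := fun k =>
    ⟨pow_pos h0 _, pow_lt_one₀ h0.le h1 (Nat.succ_ne_zero k)⟩
  have habs : ∀ k : ℕ, |lam ^ (k + 1)| < 1 := fun k =>
    abs_lt.2 ⟨by linarith [(hpow k).1], (hpow k).2⟩
  -- column sums (over n, fixed i)
  have hcol : ∀ i : ℕ, HasSum (fun n : ℕ => f n i)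
      (((i + 1 : ℕ) : ℝ) ^ l * (lam ^ (i + 1) / (1 - lam ^ (i + 1)))) := by
    intro i
    have hg := (geom_tail_hasSum (hpow i).1.le (hpow i).2).mul_left (((i + 1 : ℕ) : ℝ) ^ l)
    have heq : (fun n : ℕ => ((i + 1 : ℕ) : ℝ) ^ l * (lam ^ (i + 1)) ^ (n + 1))
        = fun n : ℕ => f n i := by
      funext n
      simp only [hf]
      rw [← pow_mul, ← pow_mul, Nat.mul_comm]
    rw [← heq]
    exact hg
  -- row summability (over i, fixed n)
  have hrow : ∀ n : ℕ, Summable (f n) := fun n => F_summable l (habs n)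
  -- summability of row sums
  have hrowsum : Summable fun n : ℕ => ∑' i, f n i := by
    have hb : Summable fun n : ℕ => (l.factorial : ℝ) / (1 - lam) ^ (l + 1) * lam ^ (n + 1) :=
      ((geom_tail_hasSum h0.le h1).summable).mul_left _
    refine Summable.of_nonneg_of_le (fun n => ?_) (fun n => ?_) hb
    · exact tsum_nonneg fun i => by positivity
    · calc (∑' i, f n i) ≤ (l.factorial : ℝ) * lam ^ (n + 1) / (1 - lam ^ (n + 1)) ^ (l + 1) :=
            F_upper l (hpow n).1.le (hpow n).2
        _ ≤ (l.factorial : ℝ) * lam ^ (n + 1) / (1 - lam) ^ (l + 1) := by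
            gcongr
            · have : lam ^ (n + 1) ≤ lam ^ 1 := pow_le_pow_of_le_one h0.le h1.le (by omega)
              rw [pow_one] at this
              linarith
        _ = (l.factorial : ℝ) / (1 - lam) ^ (l + 1) * lam ^ (n + 1) := by ring
  -- global summability
  have hunc : Summable (Function.uncurry f) := by
    rw [Function.uncurry_def]
    refine (summable_prod_of_nonneg ?_).2 ⟨fun n => hrow n, hrowsum⟩
    intro p
    have h := (hpow p.1).1
    simp only [hf]
    positivity
  have hcols : ∀ i : ℕ, Summable fun n : ℕ => f n i := fun i => (hcol i).summable
  calc (∑' i : ℕ, ((i + 1 : ℕ) : ℝ) ^ l * lam ^ (i + 1) / (1 - lam ^ (i + 1)))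
      = ∑' i : ℕ, ∑' n : ℕ, f n i := by
        refine tsum_congr fun i => ?_
        rw [(hcol i).tsum_eq, mul_div_assoc]
    _ = ∑' n : ℕ, ∑' i : ℕ, f n i := Summable.tsum_comm' hunc hrow hcols

lemma geom_lb {m : ℕ} (hm : 1 ≤ m) {lam : ℝ} (h0 : 0 < lam) (h1 : lam < 1) :
    (m : ℝ) * lam ^ m * (1 - lam) ≤ 1 - lam ^ m := by
  have hgs := geom_sum_mul (x := lam) m
  have hs : (1 - lam) * ∑ k ∈ Finset.range m, lam ^ k = 1 - lam ^ m := by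
    linear_combination (-1 : ℝ) * hgs
  have hsum : (m : ℝ) * lam ^ m ≤ ∑ k ∈ Finset.range m, lam ^ k := by
    have hle : ∀ k ∈ Finset.range m, lam ^ m ≤ lam ^ k := fun k hk =>
      pow_le_pow_of_le_one h0.le h1.le (Finset.mem_range.1 hk).le
    calc (m : ℝ) * lam ^ m = ∑ _k ∈ Finset.range m, lam ^ m := by
          rw [Finset.sum_const, Finset.card_range, nsmul_eq_mul]
      _ ≤ _ := Finset.sum_le_sum hle
  nlinarith [mul_le_mul_of_nonneg_left hsum (by linarith : (0:ℝ) ≤ 1 - lam), hs]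

lemma core_bound (l : ℕ) {N : ℕ} (hN : 1 ≤ N) {lam : ℝ} (h0 : 0 < lam) (h1 : lam < 1) :
    lam ^ N * ((1 - lam) * N) ^ (l + 1)
      ≤ ((2 * (l + 1) : ℕ) : ℝ) ^ (l + 1) * (1 - lam ^ N) ^ (l + 1) := by
  have hl0 : (0:ℝ) ≤ 1 - lam := by linarith
  have h1N : (0:ℝ) ≤ 1 - lam ^ N := by
    have : lam ^ N ≤ 1 := pow_le_one₀ h0.le h1.le
    linarith
  rcases le_or_gt N (l + 1) with hcase | hcase
  · have hb : (1 - lam) * N ≤ (1 - lam ^ N) * ((2 * (l + 1) : ℕ) : ℝ) := by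
      have h2 : (N : ℝ) ≤ ((2 * (l + 1) : ℕ) : ℝ) := by
        have := (Nat.cast_le (α := ℝ)).2 hcase
        push_cast at this ⊢
        linarith
      have h3 : 1 - lam ≤ 1 - lam ^ N := by
        have : lam ^ N ≤ lam := by
          calc lam ^ N ≤ lam ^ 1 := pow_le_pow_of_le_one h0.le h1.le hN
            _ = lam := pow_one lam
        linarith
      exact mul_le_mul h3 h2 (Nat.cast_nonneg N) h1N
    calc lam ^ N * ((1 - lam) * N) ^ (l + 1) ≤ 1 * ((1 - lam) * N) ^ (l + 1) := by
          apply mul_le_mul_of_nonneg_right _ (by positivity)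
          exact pow_le_one₀ h0.le h1.le
      _ = ((1 - lam) * N) ^ (l + 1) := one_mul _
      _ ≤ ((1 - lam ^ N) * ((2 * (l + 1) : ℕ) : ℝ)) ^ (l + 1) :=
          pow_le_pow_left₀ (by positivity) hb _
      _ = ((2 * (l + 1) : ℕ) : ℝ) ^ (l + 1) * (1 - lam ^ N) ^ (l + 1) := by
          rw [mul_pow]; ring
  · set K := l + 1 with hK
    set m := N / K with hm
    have hdm : K * m + N % K = N := by rw [hm]; exact Nat.div_add_mod N K
    have hmod : N % K < K := Nat.mod_lt _ (by omega)
    have hm1 : 1 ≤ m := by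
      rw [hm]
      exact Nat.one_le_div_iff (by omega) |>.2 (by omega)
    have hmKN : m * K ≤ N := by
      rw [hm]
      exact Nat.div_mul_le_self N K
    have hmN : m ≤ N := by
      rw [hm]
      exact Nat.div_le_self N K
    have hN2 : N ≤ 2 * (K * m) := by
      have hKm : K ≤ K * m := Nat.le_mul_of_pos_right K (by omega)
      omega
    have hA : lam ^ N ≤ (lam ^ m) ^ K := by
      rw [← pow_mul]
      exact pow_le_pow_of_le_one h0.le h1.le (by rw [hm]; exact Nat.div_mul_le_self N K)
    have hB : lam ^ N ≤ lam ^ m := pow_le_pow_of_le_one h0.le h1.le hmN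
    have hgl := geom_lb hm1 h0 h1
    have hglnn : (0:ℝ) ≤ 1 - lam ^ m := le_trans (by positivity) hgl
    have hNle : ((N:ℝ)) ≤ 2 * (K:ℝ) * (m:ℝ) := by
      have := (Nat.cast_le (α := ℝ)).2 hN2
      push_cast [hK] at this ⊢
      linarith
    calc lam ^ N * ((1 - lam) * N) ^ K
        ≤ (lam ^ m) ^ K * ((1 - lam) * (2 * (K:ℝ) * (m:ℝ))) ^ K := by
          apply mul_le_mul hA (pow_le_pow_left₀ (by positivity) ?_ _) (by positivity)
            (by positivity)
          exact mul_le_mul_of_nonneg_left hNle hl0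
      _ = ((2 * K : ℕ) : ℝ) ^ K * ((m:ℝ) * lam ^ m * (1 - lam)) ^ K := by
          push_cast
          rw [← mul_pow, ← mul_pow]
          congr 1
          ring
      _ ≤ ((2 * K : ℕ) : ℝ) ^ K * (1 - lam ^ m) ^ K := by
          apply mul_le_mul_of_nonneg_left _ (by positivity)
          exact pow_le_pow_left₀ (by positivity) hgl _
      _ ≤ ((2 * K : ℕ) : ℝ) ^ K * (1 - lam ^ N) ^ K := by
          apply mul_le_mul_of_nonneg_left _ (by positivity)
          exact pow_le_pow_left₀ (by linarith) (by linarith) _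

lemma G_bound (l : ℕ) {lam : ℝ} (h0 : 0 < lam) (h1 : lam < 1) (n : ℕ) :
    (1 - lam) ^ (l + 1) * ∑' i : ℕ, ((i + 1 : ℕ) : ℝ) ^ l * (lam ^ (n + 1)) ^ (i + 1)
      ≤ (l.factorial : ℝ) * ((2 * (l + 1) : ℕ) : ℝ) ^ (l + 1) / ((n + 1 : ℕ) : ℝ) ^ (l + 1) := by
  have hl0 : (0:ℝ) ≤ 1 - lam := by linarith
  have hx0 : 0 < lam ^ (n + 1) := pow_pos h0 _
  have hx1 : lam ^ (n + 1) < 1 := pow_lt_one₀ h0.le h1 (Nat.succ_ne_zero n)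
  have h1x : (0:ℝ) < 1 - lam ^ (n + 1) := by linarith
  have hup := F_upper l hx0.le hx1
  have hcore := core_bound l (Nat.succ_le_succ (Nat.zero_le n)) h0 h1
  have hNpos : (0:ℝ) < ((n + 1 : ℕ) : ℝ) ^ (l + 1) := by positivity
  -- the quotient bound
  have hq : lam ^ (n + 1) * (1 - lam) ^ (l + 1) / (1 - lam ^ (n + 1)) ^ (l + 1)
      ≤ ((2 * (l + 1) : ℕ) : ℝ) ^ (l + 1) / ((n + 1 : ℕ) : ℝ) ^ (l + 1) := by
    rw [div_le_div_iff₀ (by positivity) hNpos]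
    calc lam ^ (n + 1) * (1 - lam) ^ (l + 1) * ((n + 1 : ℕ) : ℝ) ^ (l + 1)
        = lam ^ (n + 1) * ((1 - lam) * ((n + 1 : ℕ) : ℝ)) ^ (l + 1) := by
          rw [mul_pow]; ring
      _ ≤ ((2 * (l + 1) : ℕ) : ℝ) ^ (l + 1) * (1 - lam ^ (n + 1)) ^ (l + 1) := hcore
  calc (1 - lam) ^ (l + 1) * ∑' i : ℕ, ((i + 1 : ℕ) : ℝ) ^ l * (lam ^ (n + 1)) ^ (i + 1)
      ≤ (1 - lam) ^ (l + 1) *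
          ((l.factorial : ℝ) * lam ^ (n + 1) / (1 - lam ^ (n + 1)) ^ (l + 1)) :=
        mul_le_mul_of_nonneg_left hup (by positivity)
    _ = (l.factorial : ℝ) *
          (lam ^ (n + 1) * (1 - lam) ^ (l + 1) / (1 - lam ^ (n + 1)) ^ (l + 1)) := by
        ring
    _ ≤ (l.factorial : ℝ) *
          (((2 * (l + 1) : ℕ) : ℝ) ^ (l + 1) / ((n + 1 : ℕ) : ℝ) ^ (l + 1)) :=
        mul_le_mul_of_nonneg_left hq (by positivity)
    _ = (l.factorial : ℝ) * ((2 * (l + 1) : ℕ) : ℝ) ^ (l + 1) / ((n + 1 : ℕ) : ℝ) ^ (l + 1) := by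
        ring

lemma G_tendsto (l : ℕ) (hl : 1 ≤ l) (n : ℕ) :
    Filter.Tendsto (fun lam : ℝ => (1 - lam) ^ (l + 1) *
        ∑' i : ℕ, ((i + 1 : ℕ) : ℝ) ^ l * (lam ^ (n + 1)) ^ (i + 1))
      (nhdsWithin 1 (Set.Ioo 0 1))
      (nhds ((l.factorial : ℝ) * (1 / ((n + 1 : ℕ) : ℝ) ^ (l + 1)))) := by
  set s : ℝ → ℝ := fun lam => ∑ k ∈ Finset.range (n + 1), lam ^ k with hs
  set lo : ℝ → ℝ := fun lam =>
    (l.factorial : ℝ) * (lam ^ (n + 1)) ^ l / (s lam) ^ (l + 1) with hlo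
  set up : ℝ → ℝ := fun lam =>
    (l.factorial : ℝ) * lam ^ (n + 1) / (s lam) ^ (l + 1) with hup
  have hs_cont : Continuous s := continuous_finset_sum _ fun k _ => continuous_pow k
  have hs_one : s 1 = ((n + 1 : ℕ) : ℝ) := by
    simp [hs]
  have hs_pow_one : (s 1) ^ (l + 1) = ((n + 1 : ℕ) : ℝ) ^ (l + 1) := by rw [hs_one]
  have hden_ne : (s 1) ^ (l + 1) ≠ 0 := by
    rw [hs_pow_one]; positivity
  have hlimval : (l.factorial : ℝ) * (1 / ((n + 1 : ℕ) : ℝ) ^ (l + 1))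
      = (l.factorial : ℝ) * (1 ^ (n + 1)) ^ l / (s 1) ^ (l + 1) := by
    rw [hs_pow_one]; ring
  have hlo_t : Filter.Tendsto lo (nhdsWithin 1 (Set.Ioo 0 1))
      (nhds ((l.factorial : ℝ) * (1 / ((n + 1 : ℕ) : ℝ) ^ (l + 1)))) := by
    rw [hlimval]
    have hnum : ContinuousAt
        (fun lam : ℝ => (l.factorial : ℝ) * (lam ^ (n + 1)) ^ l) 1 := by
      fun_prop
    have hden : ContinuousAt (fun lam : ℝ => (s lam) ^ (l + 1)) 1 :=
      (hs_cont.pow (l + 1)).continuousAt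
    exact ((hnum.div hden hden_ne).tendsto).mono_left nhdsWithin_le_nhds
  have hup_t : Filter.Tendsto up (nhdsWithin 1 (Set.Ioo 0 1))
      (nhds ((l.factorial : ℝ) * (1 / ((n + 1 : ℕ) : ℝ) ^ (l + 1)))) := by
    have hlimval2 : (l.factorial : ℝ) * (1 / ((n + 1 : ℕ) : ℝ) ^ (l + 1))
        = (l.factorial : ℝ) * 1 ^ (n + 1) / (s 1) ^ (l + 1) := by
      rw [hs_pow_one]; ring
    rw [hlimval2]
    have hnum : ContinuousAt (fun lam : ℝ => (l.factorial : ℝ) * lam ^ (n + 1)) 1 := by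
      fun_prop
    have hden : ContinuousAt (fun lam : ℝ => (s lam) ^ (l + 1)) 1 :=
      (hs_cont.pow (l + 1)).continuousAt
    exact ((hnum.div hden hden_ne).tendsto).mono_left nhdsWithin_le_nhds
  refine tendsto_of_tendsto_of_tendsto_of_le_of_le' hlo_t hup_t ?_ ?_
  · filter_upwards [self_mem_nhdsWithin] with lam hlam
    obtain ⟨h0, h1⟩ := hlam
    have hx0 : 0 < lam ^ (n + 1) := pow_pos h0 _
    have hx1 : lam ^ (n + 1) < 1 := pow_lt_one₀ h0.le h1 (Nat.succ_ne_zero n)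
    have h1x : (0:ℝ) < 1 - lam ^ (n + 1) := by linarith
    have hspos : 0 < s lam := by
      rw [hs]
      exact Finset.sum_pos (fun k _ => pow_pos h0 k) ⟨0, Finset.mem_range.2 (Nat.succ_pos n)⟩
    have hkey : (1 - lam) * s lam = 1 - lam ^ (n + 1) := by
      have hgs := geom_sum_mul (x := lam) (n + 1)
      rw [hs]
      linear_combination (-1 : ℝ) * hgs
    have hflow := F_lower l hl hx0.le hx1
    have hmul := mul_le_mul_of_nonneg_left hflow
      (pow_nonneg (by linarith : (0:ℝ) ≤ 1 - lam) (l + 1))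
    have hpowkey : (1 - lam) ^ (l + 1) * (s lam) ^ (l + 1) = (1 - lam ^ (n + 1)) ^ (l + 1) := by
      rw [← mul_pow, hkey]
    have hlne : (1 : ℝ) - lam ≠ 0 := by intro h; linarith [h]
    have hsne : s lam ≠ 0 := ne_of_gt hspos
    have hlo_eq : lo lam = (1 - lam) ^ (l + 1) *
        ((l.factorial : ℝ) * (lam ^ (n + 1)) ^ l / (1 - lam ^ (n + 1)) ^ (l + 1)) := by
      simp only [hlo]
      rw [← hpowkey]
      field_simp
    calc lo lam ≤ (1 - lam) ^ (l + 1) *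
          ((l.factorial : ℝ) * (lam ^ (n + 1)) ^ l / (1 - lam ^ (n + 1)) ^ (l + 1)) :=
          le_of_eq hlo_eq
      _ ≤ (1 - lam) ^ (l + 1) * ∑' i : ℕ, ((i + 1 : ℕ) : ℝ) ^ l * (lam ^ (n + 1)) ^ (i + 1) :=
          hmul
  · filter_upwards [self_mem_nhdsWithin] with lam hlam
    obtain ⟨h0, h1⟩ := hlam
    have hx0 : 0 < lam ^ (n + 1) := pow_pos h0 _
    have hx1 : lam ^ (n + 1) < 1 := pow_lt_one₀ h0.le h1 (Nat.succ_ne_zero n)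
    have h1x : (0:ℝ) < 1 - lam ^ (n + 1) := by linarith
    have hspos : 0 < s lam := by
      rw [hs]
      exact Finset.sum_pos (fun k _ => pow_pos h0 k) ⟨0, Finset.mem_range.2 (Nat.succ_pos n)⟩
    have hkey : (1 - lam) * s lam = 1 - lam ^ (n + 1) := by
      have hgs := geom_sum_mul (x := lam) (n + 1)
      rw [hs]
      linear_combination (-1 : ℝ) * hgs
    have hfup := F_upper l hx0.le hx1
    have hmul := mul_le_mul_of_nonneg_left hfup
      (pow_nonneg (by linarith : (0:ℝ) ≤ 1 - lam) (l + 1))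
    have hpowkey : (1 - lam) ^ (l + 1) * (s lam) ^ (l + 1) = (1 - lam ^ (n + 1)) ^ (l + 1) := by
      rw [← mul_pow, hkey]
    have hlne : (1 : ℝ) - lam ≠ 0 := by intro h; linarith [h]
    have hsne : s lam ≠ 0 := ne_of_gt hspos
    have hup_eq : up lam = (1 - lam) ^ (l + 1) *
        ((l.factorial : ℝ) * lam ^ (n + 1) / (1 - lam ^ (n + 1)) ^ (l + 1)) := by
      simp only [hup]
      rw [← hpowkey]
      field_simp
    calc (1 - lam) ^ (l + 1) * ∑' i : ℕ, ((i + 1 : ℕ) : ℝ) ^ l * (lam ^ (n + 1)) ^ (i + 1)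
        ≤ (1 - lam) ^ (l + 1) *
          ((l.factorial : ℝ) * lam ^ (n + 1) / (1 - lam ^ (n + 1)) ^ (l + 1)) := hmul
      _ = up lam := hup_eq.symm

open Filter in
/-- For `l ≥ 1`, `T_l(λ) = ∑_{i≥1} i^l λ^i/(1-λ^i)` satisfies
`T_l(λ) ~ l! ζ(l+1)/(1-λ)^{l+1}` as `λ → 1⁻`, i.e.
`lim_{λ→1⁻} (1-λ)^{l+1} T_l(λ) = l! ζ(l+1)`. -/
theorem lambert_series_heavy_traffic (l : ℕ) (hl : 1 ≤ l) :
    Tendsto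
      (fun lam : ℝ => (1 - lam) ^ (l + 1) *
        ∑' i : ℕ, ((i + 1 : ℕ) : ℝ) ^ l * lam ^ (i + 1) / (1 - lam ^ (i + 1)))
      (nhdsWithin 1 (Set.Ioo 0 1))
      (nhds ((Nat.factorial l : ℝ) * ∑' n : ℕ, 1 / ((n + 1 : ℕ) : ℝ) ^ (l + 1))) := by
  have hbound : Summable (fun n : ℕ =>
      (l.factorial : ℝ) * ((2 * (l + 1) : ℕ) : ℝ) ^ (l + 1) / ((n + 1 : ℕ) : ℝ) ^ (l + 1)) := by
    have base : Summable (fun n : ℕ => 1 / (n : ℝ) ^ (l + 1)) :=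
      Real.summable_one_div_nat_pow.2 (by omega)
    have shift : Summable (fun n : ℕ => 1 / ((n + 1 : ℕ) : ℝ) ^ (l + 1)) := by
      have h2 := (summable_nat_add_iff (f := fun n : ℕ => 1 / (n : ℝ) ^ (l + 1)) 1).2 base
      exact h2.congr fun n => by push_cast; ring
    exact (shift.mul_left ((l.factorial : ℝ) * ((2 * (l + 1) : ℕ) : ℝ) ^ (l + 1))).congr
      (fun n => by rw [mul_one_div])
  have hbd : ∀ᶠ lam in nhdsWithin (1:ℝ) (Set.Ioo 0 1), ∀ n : ℕ,
      ‖(1 - lam) ^ (l + 1) * ∑' i : ℕ, ((i + 1 : ℕ) : ℝ) ^ l * (lam ^ (n + 1)) ^ (i + 1)‖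
        ≤ (l.factorial : ℝ) * ((2 * (l + 1) : ℕ) : ℝ) ^ (l + 1) / ((n + 1 : ℕ) : ℝ) ^ (l + 1) := by
    filter_upwards [self_mem_nhdsWithin] with lam hlam n
    obtain ⟨h0, h1⟩ := hlam
    have hnn : 0 ≤ (1 - lam) ^ (l + 1) *
        ∑' i : ℕ, ((i + 1 : ℕ) : ℝ) ^ l * (lam ^ (n + 1)) ^ (i + 1) := by
      apply mul_nonneg (pow_nonneg (by linarith) _)
      exact tsum_nonneg fun i =>
        mul_nonneg (by positivity) (pow_nonneg (pow_nonneg h0.le _) _)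
    rw [Real.norm_of_nonneg hnn]
    exact G_bound l h0 h1 n
  have hkey := tendsto_tsum_of_dominated_convergence hbound (fun n => G_tendsto l hl n) hbd
  have hval : ((Nat.factorial l : ℝ) * ∑' n : ℕ, 1 / ((n + 1 : ℕ) : ℝ) ^ (l + 1))
      = ∑' n : ℕ, (l.factorial : ℝ) * (1 / ((n + 1 : ℕ) : ℝ) ^ (l + 1)) := tsum_mul_left.symm
  rw [hval]
  refine hkey.congr' ?_
  filter_upwards [self_mem_nhdsWithin] with lam hlam
  obtain ⟨h0, h1⟩ := hlam
  calc (∑' n : ℕ, (1 - lam) ^ (l + 1) *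
        ∑' i : ℕ, ((i + 1 : ℕ) : ℝ) ^ l * (lam ^ (n + 1)) ^ (i + 1))
      = (1 - lam) ^ (l + 1) *
        ∑' n : ℕ, ∑' i : ℕ, ((i + 1 : ℕ) : ℝ) ^ l * (lam ^ (n + 1)) ^ (i + 1) := tsum_mul_left
    _ = (1 - lam) ^ (l + 1) *
        ∑' i : ℕ, ((i + 1 : ℕ) : ℝ) ^ l * lam ^ (i + 1) / (1 - lam ^ (i + 1)) := by
        rw [← swap_sum l h0 h1]
end

section
/- As λ → 1⁻, T_0(λ) = ∑_{i≥1} λ^i/(1-λ^i) satisfies T_0(λ) (1-λ)/log(1/(1-λ)) → 1. -/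
open Filter Real Finset

private lemma lamkey1 {lam : ℝ} (h0 : 0 < lam) (h1 : lam < 1) (n : ℕ) :
    ((n : ℝ) + 1) * lam ^ (n + 1) * (1 - lam) ≤ 1 - lam ^ (n + 1) := by
  have hg := geom_sum_mul lam (n + 1)
  have hS : 1 - lam ^ (n + 1) = (∑ i ∈ range (n + 1), lam ^ i) * (1 - lam) := by
    linear_combination hg
  have hsum : ((n : ℝ) + 1) * lam ^ (n + 1) ≤ ∑ i ∈ range (n + 1), lam ^ i := by
    calc ((n : ℝ) + 1) * lam ^ (n + 1)
        = ∑ _i ∈ range (n + 1), lam ^ (n + 1) := by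
          simp [Finset.sum_const, mul_comm]
      _ ≤ ∑ i ∈ range (n + 1), lam ^ i :=
          Finset.sum_le_sum fun i hi =>
            pow_le_pow_of_le_one h0.le h1.le (by simpa using (Finset.mem_range.mp hi).le)
  rw [hS]
  exact mul_le_mul_of_nonneg_right hsum (by linarith)

private lemma lamkey2 {lam : ℝ} (h0 : 0 < lam) (h1 : lam < 1) (n : ℕ) :
    1 - lam ^ (n + 1) ≤ ((n : ℝ) + 1) * (1 - lam) := by
  have hg := geom_sum_mul lam (n + 1)
  have hS : 1 - lam ^ (n + 1) = (∑ i ∈ range (n + 1), lam ^ i) * (1 - lam) := by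
    linear_combination hg
  have hsum : (∑ i ∈ range (n + 1), lam ^ i) ≤ (n : ℝ) + 1 := by
    calc (∑ i ∈ range (n + 1), lam ^ i) ≤ ∑ _i ∈ range (n + 1), (1:ℝ) :=
          Finset.sum_le_sum fun i _ => pow_le_one₀ h0.le h1.le
      _ = (n : ℝ) + 1 := by simp
  rw [hS]
  exact mul_le_mul_of_nonneg_right hsum (by linarith)

private lemma lampow_lt_one {lam : ℝ} (h0 : 0 < lam) (h1 : lam < 1) (n : ℕ) :
    lam ^ (n + 1) < 1 :=
  pow_lt_one₀ h0.le h1 (Nat.succ_ne_zero n)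

private lemma lamsummable {lam : ℝ} (h0 : 0 < lam) (h1 : lam < 1) :
    Summable (fun i : ℕ => lam ^ (i + 1) / (1 - lam ^ (i + 1))) := by
  have hden : ∀ i : ℕ, 1 - lam ≤ 1 - lam ^ (i + 1) := by
    intro i
    have : lam ^ (i + 1) ≤ lam := by
      simpa using pow_le_pow_of_le_one h0.le h1.le (Nat.one_le_iff_ne_zero.mpr (Nat.succ_ne_zero i))
    linarith
  refine Summable.of_nonneg_of_le (fun i => ?_) (fun i => ?_)
    (((summable_geometric_of_lt_one h0.le h1).mul_left (lam / (1 - lam))))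
  · exact div_nonneg (pow_nonneg h0.le _) (by linarith [lampow_lt_one h0 h1 i])
  · have h2 : 0 < 1 - lam := by linarith
    rw [div_le_iff₀ (by linarith [lampow_lt_one h0 h1 i])]
    have : lam / (1 - lam) * lam ^ i * (1 - lam) = lam ^ (i + 1) := by
      field_simp; ring
    calc lam ^ (i + 1) = lam / (1 - lam) * lam ^ i * (1 - lam) := this.symm
      _ ≤ lam / (1 - lam) * lam ^ i * (1 - lam ^ (i + 1)) := by
          apply mul_le_mul_of_nonneg_left (hden i)
          positivity

private lemma lamlower {lam : ℝ} (h0 : 0 < lam) (h1 : lam < 1) :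
    Real.log (1 / (1 - lam)) ≤
      (∑' i : ℕ, lam ^ (i + 1) / (1 - lam ^ (i + 1))) * (1 - lam) := by
  have h2 : (0:ℝ) < 1 - lam := by linarith
  have hL : HasSum (fun n : ℕ => lam ^ (n + 1) / ((n : ℝ) + 1)) (-Real.log (1 - lam)) := by
    simpa using hasSum_pow_div_log_of_abs_lt_one (x := lam) (by rw [abs_of_pos h0]; exact h1)
  rw [one_div, Real.log_inv, ← tsum_mul_right, ← hL.tsum_eq]
  refine Summable.tsum_le_tsum (fun n => ?_) hL.summable ((lamsummable h0 h1).mul_right _)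
  have hd : (0:ℝ) < 1 - lam ^ (n + 1) := by linarith [lampow_lt_one h0 h1 n]
  rw [div_mul_eq_mul_div, div_le_div_iff₀ (by positivity) hd]
  calc lam ^ (n + 1) * (1 - lam ^ (n + 1)) ≤ lam ^ (n + 1) * (((n:ℝ) + 1) * (1 - lam)) :=
        mul_le_mul_of_nonneg_left (lamkey2 h0 h1 n) (by positivity)
    _ = lam ^ (n + 1) * (1 - lam) * ((n:ℝ) + 1) := by ring

private lemma lamupper {lam : ℝ} (h0 : 0 < lam) (h1 : lam < 1) :
    (∑' i : ℕ, lam ^ (i + 1) / (1 - lam ^ (i + 1))) * (1 - lam) ≤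
      Real.log (1 / (1 - lam)) + 4 := by
  have h2 : (0:ℝ) < 1 - lam := by linarith
  set ε := 1 - lam with hε
  set N := ⌈1 / ε⌉₊ with hN
  have hNpos : (0:ℝ) < N := by
    have : (1:ℝ) ≤ ⌈1 / ε⌉₊ := by
      refine Nat.one_le_cast.mpr (Nat.one_le_iff_ne_zero.mpr ?_)
      simp [Nat.ceil_eq_zero, not_le]
      positivity
    linarith
  have hεN : 1 ≤ ε * N := by
    have h := Nat.le_ceil (1 / ε)
    calc (1:ℝ) = ε * (1/ε) := by field_simp
      _ ≤ ε * N := by exact mul_le_mul_of_nonneg_left h h2.le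
  -- lam^N ≤ 1/2
  have hpowN : lam ^ N ≤ 1 / 2 := by
    have hlam_exp : lam ≤ Real.exp (-ε) := by
      have := Real.add_one_le_exp (-ε)
      linarith
    have h1' : lam ^ N ≤ Real.exp (-ε) ^ N :=
      pow_le_pow_left₀ h0.le hlam_exp N
    have h2' : Real.exp (-ε) ^ N = Real.exp (-(ε * N)) := by
      rw [← Real.exp_nat_mul]; ring_nf
    have h3' : Real.exp (-(ε * N)) ≤ Real.exp (-1) := by
      apply Real.exp_le_exp.mpr; linarith
    have h4' : Real.exp (-1) ≤ 1 / 2 := by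
      have hexp := Real.add_one_le_exp 1
      rw [Real.exp_neg, inv_le_comm₀ (Real.exp_pos 1) (by norm_num : (0:ℝ) < 1/2)]
      norm_num
      linarith
    calc lam ^ N ≤ Real.exp (-ε) ^ N := h1'
      _ = Real.exp (-(ε * N)) := h2'
      _ ≤ Real.exp (-1) := h3'
      _ ≤ 1/2 := h4'
  set f : ℕ → ℝ := fun i => lam ^ (i + 1) / (1 - lam ^ (i + 1)) with hf
  have hsum := lamsummable h0 h1
  have hsplit := Summable.sum_add_tsum_nat_add (f := f) N hsum
  -- head bound
  have hhead : (∑ i ∈ range N, f i) ≤ (1 + Real.log N) / ε := by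
    have hterm : ∀ i : ℕ, f i ≤ 1 / (((i:ℝ) + 1) * ε) := by
      intro i
      have hd : (0:ℝ) < 1 - lam ^ (i + 1) := by linarith [lampow_lt_one h0 h1 i]
      rw [hf, div_le_div_iff₀ hd (by positivity)]
      calc lam ^ (i + 1) * (((i:ℝ) + 1) * ε) = ((i:ℝ)+1) * lam ^ (i+1) * (1 - lam) := by
            rw [hε]; ring
        _ ≤ 1 - lam ^ (i + 1) := lamkey1 h0 h1 i
        _ = 1 * (1 - lam ^ (i + 1)) := (one_mul _).symm
    calc (∑ i ∈ range N, f i) ≤ ∑ i ∈ range N, 1 / (((i:ℝ) + 1) * ε) :=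
          Finset.sum_le_sum fun i _ => hterm i
      _ = (∑ i ∈ range N, ((i:ℝ) + 1)⁻¹) / ε := by
          rw [Finset.sum_div]
          refine Finset.sum_congr rfl fun i _ => ?_
          rw [one_div, mul_inv, div_eq_mul_inv]
      _ = ((harmonic N : ℝ)) / ε := by
          congr 1
          rw [harmonic]
          push_cast
          rfl
      _ ≤ (1 + Real.log N) / ε := by
          gcongr
          exact_mod_cast harmonic_le_one_add_log N
  -- tail bound
  have htail : (∑' i : ℕ, f (i + N)) ≤ 2 / ε := by
    have htb : ∀ i : ℕ, f (i + N) ≤ 2 * lam ^ (i + N + 1) := by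
      intro i
      have hple : lam ^ (i + N + 1) ≤ lam ^ N :=
        pow_le_pow_of_le_one h0.le h1.le (by omega)
      have hd : (1:ℝ)/2 ≤ 1 - lam ^ (i + N + 1) := by
        have := hpowN; linarith
      rw [hf]
      rw [div_le_iff₀ (by linarith)]
      have : 2 * lam ^ (i + N + 1) * (1 - lam ^ (i + N + 1)) ≥
          2 * lam ^ (i + N + 1) * (1/2) := by
        apply mul_le_mul_of_nonneg_left hd
        positivity
      calc lam ^ (i + N + 1) = 2 * lam ^ (i + N + 1) * (1/2) := by ring
        _ ≤ 2 * lam ^ (i + N + 1) * (1 - lam ^ (i + N + 1)) := this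
    have hgs : Summable (fun i : ℕ => 2 * lam ^ (i + N + 1)) := by
      have : (fun i : ℕ => 2 * lam ^ (i + N + 1)) =
          fun i : ℕ => (2 * lam ^ (N + 1)) * lam ^ i := by
        funext i; rw [show i + N + 1 = i + (N + 1) by omega, pow_add]; ring
      rw [this]
      exact (summable_geometric_of_lt_one h0.le h1).mul_left _
    have hts : Summable (fun i : ℕ => f (i + N)) := (summable_nat_add_iff N).mpr hsum
    calc (∑' i : ℕ, f (i + N)) ≤ ∑' i : ℕ, 2 * lam ^ (i + N + 1) :=
          Summable.tsum_le_tsum htb hts hgs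
      _ = 2 * lam ^ (N + 1) * (1/(1-lam)) := by
          have : (fun i : ℕ => 2 * lam ^ (i + N + 1)) =
              fun i : ℕ => (2 * lam ^ (N + 1)) * lam ^ i := by
            funext i; rw [show i + N + 1 = i + (N + 1) by omega, pow_add]; ring
          rw [this, tsum_mul_left, tsum_geometric_of_lt_one h0.le h1, one_div]
      _ ≤ 2 / ε := by
          rw [hε] at *
          have hp1 : lam ^ (N + 1) ≤ 1 := pow_le_one₀ h0.le h1.le
          rw [div_eq_mul_inv 2, one_div]
          have : (0:ℝ) < (1 - lam)⁻¹ := by positivity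
          nlinarith
  -- log N bound
  have hlogN : Real.log N ≤ Real.log 2 + Real.log (1 / ε) := by
    rw [← Real.log_mul (by norm_num) (by positivity)]
    apply Real.log_le_log hNpos
    have hceil : (N : ℝ) ≤ 1 / ε + 1 := (Nat.ceil_lt_add_one (by positivity)).le
    have hεle : ε ≤ 1 := by rw [hε]; linarith
    have h1ε : (1:ℝ) ≤ 1 / ε := by
      rw [le_div_iff₀ h2]; linarith
    calc (N:ℝ) ≤ 1/ε + 1 := hceil
      _ ≤ 1/ε + 1/ε := by linarith
      _ = 2 * (1/ε) := by ring
  have hlog2 : Real.log 2 ≤ 1 := by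
    rw [show (1:ℝ) = Real.log (Real.exp 1) by rw [Real.log_exp]]
    apply Real.log_le_log (by norm_num)
    have := Real.add_one_le_exp 1; linarith
  -- combine
  have hT : (∑' i : ℕ, f i) ≤ (1 + Real.log N) / ε + 2 / ε := by
    rw [← hsplit]; exact add_le_add hhead htail
  have := mul_le_mul_of_nonneg_right hT h2.le
  calc (∑' i : ℕ, lam ^ (i + 1) / (1 - lam ^ (i + 1))) * (1 - lam)
      ≤ ((1 + Real.log N) / ε + 2 / ε) * (1 - lam) := this
    _ = 3 + Real.log N := by rw [← hε]; field_simp; ring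
    _ ≤ 3 + (Real.log 2 + Real.log (1 / ε)) := by linarith
    _ ≤ Real.log (1 / (1 - lam)) + 4 := by rw [← hε]; linarith

open Filter in
/-- As `λ → 1⁻`, `T_0(λ) = ∑_{i≥1} λ^i/(1-λ^i)` satisfies
`T_0(λ) · (1-λ) / log(1/(1-λ)) → 1`. -/
theorem lambert_series_zero_heavy_traffic :
    Tendsto
      (fun lam : ℝ =>
        (∑' i : ℕ, lam ^ (i + 1) / (1 - lam ^ (i + 1))) * (1 - lam) /
          Real.log (1 / (1 - lam)))
      (nhdsWithin 1 (Set.Ioo 0 1)) (nhds 1) := by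
  set L : ℝ → ℝ := fun lam => Real.log (1 / (1 - lam)) with hLdef
  have hLtop : Tendsto L (nhdsWithin 1 (Set.Ioo 0 1)) atTop := by
    apply Real.tendsto_log_atTop.comp
    have h1 : Tendsto (fun lam : ℝ => 1 - lam) (nhdsWithin 1 (Set.Ioo 0 1))
        (nhdsWithin 0 (Set.Ioi 0)) := by
      apply tendsto_nhdsWithin_of_tendsto_nhds_of_eventually_within
      · have : Tendsto (fun lam : ℝ => 1 - lam) (nhds 1) (nhds 0) := by
          have := (tendsto_const_nhds (x := (1:ℝ)) (f := nhds (1:ℝ))).sub tendsto_id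
          simpa using this
        exact this.mono_left nhdsWithin_le_nhds
      · filter_upwards [self_mem_nhdsWithin] with lam hlam
        exact sub_pos.mpr hlam.2
    have := tendsto_inv_nhdsGT_zero.comp h1
    simpa [Function.comp_def, one_div] using this
  have hbound : ∀ᶠ lam in nhdsWithin (1:ℝ) (Set.Ioo 0 1),
      1 ≤ (∑' i : ℕ, lam ^ (i + 1) / (1 - lam ^ (i + 1))) * (1 - lam) / L lam ∧
      (∑' i : ℕ, lam ^ (i + 1) / (1 - lam ^ (i + 1))) * (1 - lam) / L lam
        ≤ 1 + 4 / L lam := by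
    filter_upwards [self_mem_nhdsWithin] with lam hlam
    obtain ⟨h0, h1⟩ := hlam
    have h2 : (0:ℝ) < 1 - lam := by linarith
    have hLpos : 0 < L lam := by
      rw [hLdef]
      apply Real.log_pos
      rw [lt_div_iff₀ h2]; linarith
    constructor
    · rw [le_div_iff₀ hLpos, one_mul]
      exact lamlower h0 h1
    · rw [div_le_iff₀ hLpos]
      have := lamupper h0 h1
      calc (∑' i : ℕ, lam ^ (i + 1) / (1 - lam ^ (i + 1))) * (1 - lam)
          ≤ L lam + 4 := this
        _ = (1 + 4 / L lam) * L lam := by field_simp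
  have hupper : Tendsto (fun lam : ℝ => 1 + 4 / L lam)
      (nhdsWithin 1 (Set.Ioo 0 1)) (nhds 1) := by
    have : Tendsto (fun lam : ℝ => 4 / L lam) (nhdsWithin 1 (Set.Ioo 0 1)) (nhds 0) :=
      tendsto_const_nhds.div_atTop hLtop
    simpa using (tendsto_const_nhds (x := (1:ℝ))).add this
  refine tendsto_of_tendsto_of_tendsto_of_le_of_le' tendsto_const_nhds hupper
    (hbound.mono fun lam h => h.1) (hbound.mono fun lam h => h.2)
end

section
/- For 0 < λ < 1 and m ≥ 1, the m-th moment of the station index I satisfies Ex[I^m] = (1-λ) ∑_{l=0}^{m-1} C(m,l) (-1)^{m-1-l} T_l(λ), where Pr[I ≥ i] = (1-λ)λ^i/(1-λ^i) for i ≥ 1 and T_l(λ) = ∑_{i≥1} i^l λ^i/(1-λ^i). -/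
open Finset

set_option maxHeartbeats 1000000 in
private lemma key_summable {lam : ℝ} (h0 : 0 < lam) (h1 : lam < 1)
    (c : ℕ → ℝ) (k d : ℕ) (hd : 1 ≤ d) (hc : ∀ i, |c i| ≤ ((i : ℝ) + 2) ^ k) :
    Summable (fun i : ℕ => c i * (lam ^ (i + d) / (1 - lam ^ (i + d)))) := by
  have h1n : ‖lam‖ < 1 := by rw [Real.norm_eq_abs, abs_of_pos h0]; exact h1
  have hgeo : Summable (fun n : ℕ => (n : ℝ) ^ k * lam ^ n) :=
    summable_pow_mul_geometric_of_norm_lt_one k h1n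
  have h2 : Summable (fun i : ℕ => ((i + 2 : ℕ) : ℝ) ^ k * lam ^ (i + 2)) :=
    (summable_nat_add_iff 2).mpr hgeo
  have hb : Summable (fun i : ℕ => ((i : ℝ) + 2) ^ k * lam ^ (i + 1) / (1 - lam)) := by
    have h3 := h2.mul_right (lam⁻¹ * (1 - lam)⁻¹)
    refine h3.congr fun i => ?_
    push_cast
    rw [div_eq_mul_inv, show ((i : ℝ) + 2) ^ k * lam ^ (i + 2) * (lam⁻¹ * (1 - lam)⁻¹)
      = ((i : ℝ) + 2) ^ k * lam ^ (i + 1) * (lam * lam⁻¹) * (1 - lam)⁻¹ by ring,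
      mul_inv_cancel₀ h0.ne', mul_one]
  refine Summable.of_norm_bounded hb fun i => ?_
  have hl1 : 0 < 1 - lam := by linarith
  have hpowle : lam ^ (i + d) ≤ lam := by
    calc lam ^ (i + d) ≤ lam ^ 1 := pow_le_pow_of_le_one h0.le h1.le (by omega)
    _ = lam := pow_one lam
  have hnum : lam ^ (i + d) ≤ lam ^ (i + 1) := pow_le_pow_of_le_one h0.le h1.le (by omega)
  have hden : 1 - lam ≤ 1 - lam ^ (i + d) := by linarith
  have hfrac : lam ^ (i + d) / (1 - lam ^ (i + d)) ≤ lam ^ (i + 1) / (1 - lam) := by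
    gcongr
  have hfracnn : 0 ≤ lam ^ (i + d) / (1 - lam ^ (i + d)) := by
    apply div_nonneg (pow_nonneg h0.le _)
    have : lam ^ (i + d) ≤ lam := hpowle
    linarith
  rw [norm_mul, Real.norm_eq_abs, Real.norm_eq_abs, abs_of_nonneg hfracnn]
  calc |c i| * (lam ^ (i + d) / (1 - lam ^ (i + d)))
      ≤ ((i : ℝ) + 2) ^ k * (lam ^ (i + 1) / (1 - lam)) := by
        apply mul_le_mul (hc i) hfrac hfracnn (by positivity)
    _ = ((i : ℝ) + 2) ^ k * lam ^ (i + 1) / (1 - lam) := by ring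

private lemma binom_id (x : ℝ) (m : ℕ) :
    x ^ m - (x - 1) ^ m = ∑ l ∈ Finset.range m, (m.choose l : ℝ) * (-1) ^ (m - 1 - l) * x ^ l := by
  have h : (x - 1) ^ m = ∑ l ∈ Finset.range (m + 1), (-1 : ℝ) ^ (l + m) * x ^ l * (m.choose l : ℝ) := by
    rw [sub_pow]
    simp only [one_pow, mul_one]
  have hmm : (-1 : ℝ) ^ (m + m) = 1 := by
    rw [← two_mul, pow_mul]; norm_num
  rw [h, Finset.sum_range_succ, hmm, Nat.choose_self]
  rw [show x ^ m - (∑ l ∈ Finset.range m, (-1 : ℝ) ^ (l + m) * x ^ l * (m.choose l : ℝ)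
        + 1 * x ^ m * ((1 : ℕ) : ℝ))
      = ∑ l ∈ Finset.range m, -((-1 : ℝ) ^ (l + m) * x ^ l * (m.choose l : ℝ)) by
    rw [Finset.sum_neg_distrib]; push_cast; ring]
  apply Finset.sum_congr rfl
  intro l hl
  have hlm : l < m := Finset.mem_range.mp hl
  have hp : (-1 : ℝ) ^ (l + m) = -(-1 : ℝ) ^ (m - 1 - l) := by
    rw [show l + m = (m - 1 - l) + 1 + 2 * l by omega, pow_add, pow_add, pow_mul]
    norm_num
  rw [hp]
  ring

set_option maxHeartbeats 1000000

/-- For `0 < λ < 1` and `m ≥ 1`, the `m`-th moment of the station index `I` satisfies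
`Ex[I^m] = (1-λ) ∑_{l=0}^{m-1} C(m,l) (-1)^{m-1-l} T_l(λ)`, where
`Pr[I ≥ i] = (1-λ)λ^i/(1-λ^i)` for `i ≥ 1` and `T_l(λ) = ∑_{i≥1} i^l λ^i/(1-λ^i)`. -/
theorem fos_station_index_moments (lam : ℝ) (hlam0 : 0 < lam) (hlam1 : lam < 1)
    (m : ℕ) (hm : 1 ≤ m) :
    (∑' i : ℕ, ((i + 1 : ℕ) : ℝ) ^ m *
        ((1 - lam) * lam ^ (i + 1) / (1 - lam ^ (i + 1)) -
          (1 - lam) * lam ^ (i + 2) / (1 - lam ^ (i + 2))))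
      = (1 - lam) * ∑ l ∈ Finset.range m, (m.choose l : ℝ) * (-1) ^ (m - 1 - l) *
          ∑' i : ℕ, ((i + 1 : ℕ) : ℝ) ^ l * lam ^ (i + 1) / (1 - lam ^ (i + 1)) := by
  -- abbreviations
  set p : ℕ → ℝ := fun i => ((i : ℝ) + 1) ^ m * (lam ^ (i + 1) / (1 - lam ^ (i + 1))) with hp
  set R0 : ℕ → ℝ := fun i => (((i : ℝ) + 2) ^ m - ((i : ℝ) + 1) ^ m) *
      (lam ^ (i + 2) / (1 - lam ^ (i + 2))) with hR0
  set S0 : ℕ → ℝ := fun i => (((i : ℝ) + 1) ^ m - (i : ℝ) ^ m) *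
      (lam ^ (i + 1) / (1 - lam ^ (i + 1))) with hS0
  -- summabilities
  have hs_g : ∀ l : ℕ, Summable (fun i : ℕ => ((i : ℝ) + 1) ^ l *
      (lam ^ (i + 1) / (1 - lam ^ (i + 1)))) := by
    intro l
    refine key_summable hlam0 hlam1 _ l 1 le_rfl fun i => ?_
    rw [abs_of_nonneg (by positivity)]
    exact pow_le_pow_left₀ (by positivity) (by linarith) l
  have hs_p : Summable p := hs_g m
  have hs_p' : Summable (fun i => p (i + 1)) := (summable_nat_add_iff 1).mpr hs_p
  have hs_R : Summable R0 := by
    refine key_summable hlam0 hlam1 _ m 2 (by omega) fun i => ?_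
    have h1 : ((i : ℝ) + 1) ^ m ≤ ((i : ℝ) + 2) ^ m :=
      pow_le_pow_left₀ (by positivity) (by linarith) m
    have h2 : (0 : ℝ) ≤ ((i : ℝ) + 1) ^ m := by positivity
    rw [abs_of_nonneg (by linarith)]
    linarith
  have hs_S : Summable S0 := by
    refine key_summable hlam0 hlam1 _ m 1 le_rfl fun i => ?_
    have h1 : ((i : ℝ)) ^ m ≤ ((i : ℝ) + 1) ^ m :=
      pow_le_pow_left₀ (by positivity) (by linarith) m
    have h2 : (0 : ℝ) ≤ ((i : ℝ)) ^ m := by positivity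
    have h3 : ((i : ℝ) + 1) ^ m ≤ ((i : ℝ) + 2) ^ m :=
      pow_le_pow_left₀ (by positivity) (by linarith) m
    rw [abs_of_nonneg (by linarith)]
    linarith
  -- telescoping
  have htel : (∑' i : ℕ, (p i - p (i + 1))) = p 0 := by
    rw [hs_p.tsum_sub hs_p', hs_p.tsum_eq_zero_add]
    ring
  have hp0S0 : p 0 = S0 0 := by
    simp [hp, hS0, zero_pow (by omega : m ≠ 0)]
  have hshift : (∑' i : ℕ, S0 (i + 1)) = ∑' i : ℕ, R0 i := by
    refine tsum_congr fun i => ?_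
    simp only [hS0, hR0]
    push_cast
    ring
  calc (∑' i : ℕ, ((i + 1 : ℕ) : ℝ) ^ m *
        ((1 - lam) * lam ^ (i + 1) / (1 - lam ^ (i + 1)) -
          (1 - lam) * lam ^ (i + 2) / (1 - lam ^ (i + 2))))
      = ∑' i : ℕ, ((1 - lam) * (p i - p (i + 1)) + (1 - lam) * R0 i) := by
        refine tsum_congr fun i => ?_
        simp only [hp, hR0]
        push_cast
        ring
    _ = (1 - lam) * (∑' i : ℕ, (p i - p (i + 1))) + (1 - lam) * ∑' i : ℕ, R0 i := by
        rw [((hs_p.sub hs_p').mul_left _).tsum_add (hs_R.mul_left _), tsum_mul_left,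
          tsum_mul_left]
    _ = (1 - lam) * ∑' i : ℕ, S0 i := by
        rw [htel, hs_S.tsum_eq_zero_add, hshift, hp0S0]
        ring
    _ = (1 - lam) * ∑ l ∈ Finset.range m, (m.choose l : ℝ) * (-1) ^ (m - 1 - l) *
          ∑' i : ℕ, ((i + 1 : ℕ) : ℝ) ^ l * lam ^ (i + 1) / (1 - lam ^ (i + 1)) := by
        congr 1
        have hG : ∀ l, (∑' i : ℕ, ((i + 1 : ℕ) : ℝ) ^ l * lam ^ (i + 1) / (1 - lam ^ (i + 1)))
            = ∑' i : ℕ, ((i : ℝ) + 1) ^ l * (lam ^ (i + 1) / (1 - lam ^ (i + 1))) :=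
          fun l => tsum_congr fun i => by push_cast; ring
        calc (∑' i : ℕ, S0 i)
            = ∑' i : ℕ, ∑ l ∈ Finset.range m, ((m.choose l : ℝ) * (-1) ^ (m - 1 - l)) *
              (((i : ℝ) + 1) ^ l * (lam ^ (i + 1) / (1 - lam ^ (i + 1)))) := by
              refine tsum_congr fun i => ?_
              have hb := binom_id ((i : ℝ) + 1) m
              rw [show ((i : ℝ) + 1) - 1 = (i : ℝ) by ring] at hb
              simp only [hS0]
              rw [hb, Finset.sum_mul]
              exact Finset.sum_congr rfl fun l _ => by ring
          _ = ∑ l ∈ Finset.range m, ∑' i : ℕ, ((m.choose l : ℝ) * (-1) ^ (m - 1 - l)) *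
              (((i : ℝ) + 1) ^ l * (lam ^ (i + 1) / (1 - lam ^ (i + 1)))) :=
              Summable.tsum_finsetSum fun l _ => (hs_g l).mul_left _
          _ = ∑ l ∈ Finset.range m, (m.choose l : ℝ) * (-1) ^ (m - 1 - l) *
              ∑' i : ℕ, ((i + 1 : ℕ) : ℝ) ^ l * lam ^ (i + 1) / (1 - lam ^ (i + 1)) := by
              refine Finset.sum_congr rfl fun l _ => ?_
              rw [tsum_mul_left, hG l]
end

section
/- For 0 < λ < 1 and i ≥ 1, the derivative at t = 1 of g_i(t) = q^i t^i (Q(t)-P(t)) / (Q(t)^{i+1} - P(t)^{i+1} - pt(Q(t)^i - P(t)^i)) equals (1+λ)(i(1-λ) - λ(1-λ^i))/(1-λ)², where p = λ/(1+λ), q = 1/(1+λ), P(t) = (1-√(1-4pqt²))/2, Q(t) = (1+√(1-4pqt²))/2. -/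
set_option maxHeartbeats 1600000


/-- For `0 < λ < 1` and `i ≥ 1`, the derivative at `t = 1` of
`g_i(t) = q^i t^i (Q(t)-P(t)) / (Q(t)^{i+1} - P(t)^{i+1} - pt(Q(t)^i - P(t)^i))`
equals `(1+λ)(i(1-λ) - λ(1-λ^i))/(1-λ)²`, where `p = λ/(1+λ)`, `q = 1/(1+λ)`,
`P(t) = (1-√(1-4pqt²))/2`, `Q(t) = (1+√(1-4pqt²))/2`. -/
theorem absorption_gf_deriv_at_one (lam : ℝ) (hlam0 : 0 < lam) (hlam1 : lam < 1)
    (i : ℕ) (hi : 1 ≤ i) :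
    let p : ℝ := lam / (1 + lam)
    let q : ℝ := 1 / (1 + lam)
    let P : ℝ → ℝ := fun t => (1 - Real.sqrt (1 - 4 * p * q * t ^ 2)) / 2
    let Q : ℝ → ℝ := fun t => (1 + Real.sqrt (1 - 4 * p * q * t ^ 2)) / 2
    HasDerivAt
      (fun t : ℝ => q ^ i * t ^ i * (Q t - P t) /
        (Q t ^ (i + 1) - P t ^ (i + 1) - p * t * (Q t ^ i - P t ^ i)))
      ((1 + lam) * ((i : ℝ) * (1 - lam) - lam * (1 - lam ^ i)) / (1 - lam) ^ 2) 1 := by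
  intro p q P Q
  obtain ⟨j, rfl⟩ : ∃ j, i = j + 1 := ⟨i - 1, (Nat.succ_pred_eq_of_pos hi).symm⟩
  have h1 : (0:ℝ) < 1 + lam := by linarith
  have h1' : (1:ℝ) + lam ≠ 0 := ne_of_gt h1
  have h2 : (0:ℝ) < 1 - lam := by linarith
  have h2' : (1:ℝ) - lam ≠ 0 := ne_of_gt h2
  set s : ℝ := (1 - lam) / (1 + lam) with hsdef
  have hs : (0:ℝ) < s := div_pos h2 h1
  have hs' : s ≠ 0 := ne_of_gt hs
  have harg : 1 - 4 * p * q * (1:ℝ) ^ 2 = s ^ 2 := by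
    simp only [p, q, hsdef]
    field_simp
    ring
  have hsqrt : Real.sqrt (1 - 4 * p * q * (1:ℝ) ^ 2) = s := by
    rw [harg, Real.sqrt_sq hs.le]
  have hargne : 1 - 4 * p * q * (1:ℝ) ^ 2 ≠ 0 := by
    rw [harg]; positivity
  -- derivative of inner argument
  have hu : HasDerivAt (fun t : ℝ => 1 - 4 * p * q * t ^ 2)
      (0 - 4 * p * q * (↑(2:ℕ) * (1:ℝ) ^ (2 - 1))) 1 :=
    (hasDerivAt_const 1 (1:ℝ)).sub ((hasDerivAt_pow 2 1).const_mul (4 * p * q))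
  -- derivative of sqrt part
  have hsq : HasDerivAt (fun t : ℝ => Real.sqrt (1 - 4 * p * q * t ^ 2))
      (-(4 * p * q) / s) 1 := by
    have h := (Real.hasDerivAt_sqrt hargne).comp 1 hu
    refine HasDerivAt.congr_deriv h ?_; symm
    rw [hsqrt]
    field_simp
    ring
  have hP : HasDerivAt P (-(-(4 * p * q) / s) / 2) 1 := by
    have := ((hasDerivAt_const 1 (1:ℝ)).sub hsq).div_const 2
    refine HasDerivAt.congr_deriv this ?_; symm
    ring
  have hQ : HasDerivAt Q ((-(4 * p * q) / s) / 2) 1 := by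
    have := ((hasDerivAt_const 1 (1:ℝ)).add hsq).div_const 2
    refine HasDerivAt.congr_deriv this ?_; symm
    ring
  have hP1 : P 1 = p := by
    simp only [P, hsqrt, p, hsdef]
    field_simp
    ring
  have hQ1 : Q 1 = q := by
    simp only [Q, hsqrt, q, hsdef]
    field_simp
    ring
  -- numerator
  have hN : HasDerivAt (fun t : ℝ => q ^ (j+1) * t ^ (j+1) * (Q t - P t))
      ((q ^ (j+1) * (↑(j+1) * (1:ℝ) ^ (j+1-1))) * (Q 1 - P 1)
        + q ^ (j+1) * (1:ℝ) ^ (j+1) * ((-(4 * p * q) / s) / 2 - -(-(4 * p * q) / s) / 2)) 1 :=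
    (((hasDerivAt_pow (j+1) 1).const_mul (q ^ (j+1)))).mul (hQ.sub hP)
  -- denominator
  have hD : HasDerivAt (fun t : ℝ => Q t ^ (j+1+1) - P t ^ (j+1+1) - p * t * (Q t ^ (j+1) - P t ^ (j+1)))
      ((↑(j+1+1) * Q 1 ^ (j+1+1-1) * ((-(4 * p * q) / s) / 2)
        - ↑(j+1+1) * P 1 ^ (j+1+1-1) * (-(-(4 * p * q) / s) / 2))
       - ((p * 1) * (↑(j+1) * Q 1 ^ (j+1-1) * ((-(4 * p * q) / s) / 2)
            - ↑(j+1) * P 1 ^ (j+1-1) * (-(-(4 * p * q) / s) / 2))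
          + (p * 1) * (Q 1 ^ (j+1) - P 1 ^ (j+1)))) 1 := by
    have hlin : HasDerivAt (fun t : ℝ => p * t) p 1 := by
      simpa using (hasDerivAt_id (1:ℝ)).const_mul p
    have := ((hQ.pow (j+1+1)).sub (hP.pow (j+1+1))).sub
      ((hlin.mul ((hQ.pow (j+1)).sub (hP.pow (j+1)))))
    refine HasDerivAt.congr_deriv this ?_; symm
    simp only [Nat.add_sub_cancel, Pi.sub_apply, Pi.pow_apply]
    ring
  have hD1 : Q 1 ^ (j+1+1) - P 1 ^ (j+1+1) - p * 1 * (Q 1 ^ (j+1) - P 1 ^ (j+1)) ≠ 0 := by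
    rw [hP1, hQ1]
    have : q ^ (j+1+1) - p ^ (j+1+1) - p * 1 * (q ^ (j+1) - p ^ (j+1)) = q ^ (j+1) * (q - p) := by
      ring
    rw [this]
    have hqp : 0 < q - p := by
      simp only [p, q]
      rw [div_sub_div_same]
      exact div_pos h2 h1
    have hqpos : 0 < q := by positivity
    positivity
  have hg := hN.div hD hD1
  refine HasDerivAt.congr_deriv hg ?_; symm
  rw [hP1, hQ1]
  have hqp : (0:ℝ) < q - p := by
    simp only [p, q]
    rw [div_sub_div_same]
    exact div_pos h2 h1
  have hq0 : (0:ℝ) < q := by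
    simp only [q]; positivity
  have hD1eq : q ^ (j+1+1) - p ^ (j+1+1) - p * 1 * (q ^ (j+1) - p ^ (j+1))
      = q ^ (j+1) * (q - p) := by ring
  rw [hD1eq]
  have hZ : (0:ℝ) < q ^ (j+1) * (q - p) := by positivity
  rw [div_eq_div_iff (by positivity) (by positivity : ((q ^ (j+1) * (q - p)) ^ 2 : ℝ) ≠ 0)]
  have hpq : p = lam * q := by
    simp only [p, q]; ring
  have hpj : ∀ n : ℕ, p ^ n = lam ^ n * q ^ n := fun n => by rw [hpq, mul_pow]
  simp only [Nat.add_sub_cancel, one_pow, pow_succ, hpj]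
  set a : ℝ := q ^ j with ha
  set L : ℝ := lam ^ j with hL
  simp only [p, q, hsdef]
  push_cast
  field_simp
  ring
end

section
/- As λ → 1⁻, (1-λ)³ · (λ(6+λ+λ²)/(1-λ)³ - 4T₁(λ)/(1-λ)) → 8 - 4ζ(2) = 8 - 2π²/3, where T₁(λ) = ∑_{i≥1} iλ^i/(1-λ^i). -/
open Filter Real


lemma pos_one_sub_pow {l : ℝ} (h0 : 0 < l) (h1 : l < 1) (n : ℕ) : 0 < 1 - l ^ (n + 1) := by
  have : l ^ (n+1) < 1 := pow_lt_one₀ h0.le h1 (Nat.succ_ne_zero n)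
  linarith

-- HasSum over i for fixed x = l^{k+1}: (i+1) x^{i+1} sums to x/(1-x)^2
lemma hasSum_inner {x : ℝ} (h0 : 0 < x) (h1 : x < 1) :
    HasSum (fun i : ℕ => ((i + 1 : ℕ) : ℝ) * x ^ (i + 1)) (x / (1 - x) ^ 2) := by
  have h := hasSum_coe_mul_geometric_of_norm_lt_one (r := x) (by rw [Real.norm_eq_abs, abs_lt]; constructor <;> linarith)
  have := (hasSum_nat_add_iff' (f := fun n : ℕ => (n : ℝ) * x ^ n) 1).mpr h
  simpa using this

-- HasSum over k for fixed i: (i+1) * (l^{i+1})^{k+1} sums to (i+1)*l^{i+1}/(1-l^{i+1})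
lemma hasSum_geom_shift {x : ℝ} (h0 : 0 < x) (h1 : x < 1) :
    HasSum (fun k : ℕ => x ^ (k + 1)) (x / (1 - x)) := by
  have h := hasSum_geometric_of_lt_one h0.le h1
  have := h.mul_left x
  simpa [pow_succ, mul_comm, div_eq_mul_inv] using this

lemma key_swap {l : ℝ} (h0 : 0 < l) (h1 : l < 1) :
    ∑' i : ℕ, ((i + 1 : ℕ) : ℝ) * l ^ (i + 1) / (1 - l ^ (i + 1))
      = ∑' k : ℕ, l ^ (k + 1) / (1 - l ^ (k + 1)) ^ 2 := by
  set f : ℕ → ℕ → ℝ := fun i k => ((i + 1 : ℕ) : ℝ) * (l ^ (i + 1)) ^ (k + 1) with hf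
  have hpow : ∀ n : ℕ, 0 < l ^ (n+1) ∧ l ^ (n+1) < 1 := fun n =>
    ⟨pow_pos h0 _, pow_lt_one₀ h0.le h1 (Nat.succ_ne_zero n)⟩
  -- row sums
  have hrow : ∀ i : ℕ, HasSum (f i) (((i + 1 : ℕ) : ℝ) * l ^ (i + 1) / (1 - l ^ (i + 1))) := by
    intro i
    have := (hasSum_geom_shift (hpow i).1 (hpow i).2).mul_left ((i + 1 : ℕ) : ℝ)
    simpa [hf, mul_div_assoc] using this
  -- column sums
  have hcol : ∀ k : ℕ, HasSum (fun i => f i k) (l ^ (k + 1) / (1 - l ^ (k + 1)) ^ 2) := by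
    intro k
    have := hasSum_inner (hpow k).1 (hpow k).2
    have heq : ∀ i : ℕ, ((i + 1 : ℕ) : ℝ) * (l ^ (k + 1)) ^ (i + 1) = f i k := by
      intro i; rw [hf]; ring_nf
    simpa [← heq] using this
  -- summability of the uncurried family
  have hnn : ∀ p : ℕ × ℕ, 0 ≤ f p.1 p.2 := by
    intro p
    exact mul_nonneg (by positivity) (pow_nonneg (pow_nonneg h0.le _) _)
  have hsum2 : Summable fun i : ℕ => ∑' k, f i k := by
    have hb : Summable fun i : ℕ => ((i + 1 : ℕ) : ℝ) * l ^ (i + 1) / (1 - l) := by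
      apply Summable.div_const
      exact (hasSum_inner h0 h1).summable
    apply hb.of_nonneg_of_le
    · intro i
      rw [(hrow i).tsum_eq]
      exact div_nonneg (by positivity) (pos_one_sub_pow h0 h1 i).le
    · intro i
      rw [(hrow i).tsum_eq]
      have hle : l ^ (i + 1) ≤ l := by
        simpa using pow_le_pow_of_le_one h0.le h1.le (Nat.one_le_iff_ne_zero.mpr (Nat.succ_ne_zero i))
      exact div_le_div_of_nonneg_left (by positivity) (by linarith) (by linarith)
  have hsummable : Summable (Function.uncurry f) :=
    (summable_prod_of_nonneg hnn).mpr ⟨fun i => (hrow i).summable, hsum2⟩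
  calc ∑' i : ℕ, ((i + 1 : ℕ) : ℝ) * l ^ (i + 1) / (1 - l ^ (i + 1))
      = ∑' (i) (k), f i k := tsum_congr fun i => ((hrow i).tsum_eq).symm
    _ = ∑' (k) (i), f i k := (hsummable.tsum_comm).symm
    _ = ∑' k : ℕ, l ^ (k + 1) / (1 - l ^ (k + 1)) ^ 2 :=
        tsum_congr fun k => (hcol k).tsum_eq

lemma term_bound {l : ℝ} (h0 : 0 < l) (h1 : l < 1) (k : ℕ) :
    l ^ (k + 1) * (1 - l) ^ 2 / (1 - l ^ (k + 1)) ^ 2 ≤ 16 / ((k : ℝ) + 1) ^ 2 := by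
  have hcast : ((k : ℝ) + 1) = ((k + 1 : ℕ) : ℝ) := by push_cast; ring
  set n := k + 1 with hn
  have hn1 : 1 ≤ n := Nat.le_add_left 1 k
  have hpos := pos_one_sub_pow h0 h1 k
  rcases Nat.lt_or_ge n 2 with h2 | h2
  · -- n = 1
    have hn' : n = 1 := by omega
    rw [hcast, hn']
    have hl1 : (1 : ℝ) - l ≠ 0 := by intro h; rw [sub_eq_zero] at h; exact absurd h.symm (ne_of_lt h1)
    have : l ^ 1 * (1 - l) ^ 2 / (1 - l ^ 1) ^ 2 = l := by
      rw [pow_one]; field_simp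
    rw [this]
    norm_num; linarith
  · set m := n / 2 with hm
    have hm1 : 1 ≤ m := by omega
    have h2m : 2 * m ≤ n := by omega
    have h4m : n ≤ 4 * m := by omega
    have hS : ((m : ℝ)) * l ^ m ≤ ∑ j ∈ Finset.range n, l ^ j := by
      calc ((m : ℝ)) * l ^ m = ∑ _j ∈ Finset.range m, l ^ m := by
            rw [Finset.sum_const, Finset.card_range, nsmul_eq_mul]
        _ ≤ ∑ j ∈ Finset.range m, l ^ j := by
            apply Finset.sum_le_sum
            intro j hj
            exact pow_le_pow_of_le_one h0.le h1.le (le_of_lt (Finset.mem_range.mp hj))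
        _ ≤ ∑ j ∈ Finset.range n, l ^ j := by
            apply Finset.sum_le_sum_of_subset_of_nonneg
            · exact Finset.range_subset_range.mpr (by omega)
            · intro j _ _; positivity
    have hgeom : 1 - l ^ n = (1 - l) * ∑ j ∈ Finset.range n, l ^ j := by
      have := geom_sum_mul l n
      linarith [this]
    have hml : (0 : ℝ) < (m : ℝ) * l ^ m := by positivity
    have hden : (1 - l) ^ 2 * ((m : ℝ) * l ^ m) ^ 2 ≤ (1 - l ^ n) ^ 2 := by
      rw [hgeom]
      calc (1 - l) ^ 2 * ((m : ℝ) * l ^ m) ^ 2 = ((1 - l) * ((m : ℝ) * l ^ m)) ^ 2 := by ring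
        _ ≤ ((1 - l) * ∑ j ∈ Finset.range n, l ^ j) ^ 2 := by
            apply pow_le_pow_left₀ (mul_nonneg (by linarith) hml.le)
            exact mul_le_mul_of_nonneg_left hS (by linarith)
    have step1 : l ^ n * (1 - l) ^ 2 / (1 - l ^ n) ^ 2
        ≤ l ^ n * (1 - l) ^ 2 / ((1 - l) ^ 2 * ((m : ℝ) * l ^ m) ^ 2) :=
      div_le_div_of_nonneg_left (by positivity)
        (by have hl' : (0:ℝ) < 1 - l := by linarith
            positivity) hden
    have step2 : l ^ n * (1 - l) ^ 2 / ((1 - l) ^ 2 * ((m : ℝ) * l ^ m) ^ 2)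
        = l ^ n / (l ^ (2 * m)) / (m : ℝ) ^ 2 := by
      rw [two_mul, pow_add]
      have hl1 : (1 - l) ≠ 0 := by linarith
      have hlm : l ^ m ≠ 0 := by positivity
      have hmne : ((m : ℝ)) ≠ 0 := by positivity
      field_simp
      ring
    have step3 : l ^ n / l ^ (2 * m) ≤ 1 := by
      rw [div_le_one (by positivity)]
      exact pow_le_pow_of_le_one h0.le h1.le h2m
    have step4 : l ^ n / (l ^ (2 * m)) / (m : ℝ) ^ 2 ≤ 1 / (m : ℝ) ^ 2 := by
      apply div_le_div_of_nonneg_right step3 (by positivity)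
    have step5 : 1 / (m : ℝ) ^ 2 ≤ 16 / ((n : ℕ) : ℝ) ^ 2 := by
      rw [div_le_div_iff₀ (by positivity) (by positivity)]
      have h1' : ((n : ℕ) : ℝ) ≤ 4 * (m : ℝ) := by exact_mod_cast h4m
      have h2' : (0 : ℝ) ≤ ((n : ℕ) : ℝ) := Nat.cast_nonneg n
      nlinarith
    rw [hcast]
    calc l ^ n * (1 - l) ^ 2 / (1 - l ^ n) ^ 2 ≤ 1 / (m : ℝ) ^ 2 := by
          refine step1.trans ?_
          rw [step2]; exact step4
      _ ≤ 16 / ((n : ℕ) : ℝ) ^ 2 := step5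

lemma summable_bound : Summable fun k : ℕ => 16 / ((k : ℝ) + 1) ^ 2 := by
  have h : Summable fun n : ℕ => 1 / (n : ℝ) ^ 2 :=
    Real.summable_one_div_nat_pow.mpr one_lt_two
  have h2 : Summable fun k : ℕ => 1 / ((k : ℝ) + 1) ^ 2 := by
    have := (summable_nat_add_iff 1).mpr h
    apply this.congr
    intro n; push_cast; ring
  simpa [div_eq_mul_inv, mul_assoc] using h2.mul_left (16 : ℝ)

lemma tsum_inv_sq : ∑' k : ℕ, 1 / ((k : ℝ) + 1) ^ 2 = π ^ 2 / 6 := by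
  have h := (hasSum_nat_add_iff' (f := fun n : ℕ => 1 / (n : ℝ) ^ 2) 1).mpr hasSum_zeta_two
  have h' : HasSum (fun k : ℕ => 1 / ((k : ℝ) + 1) ^ 2) (π ^ 2 / 6) := by
    have h0 : π ^ 2 / 6 - ∑ i ∈ Finset.range 1, 1 / (i : ℝ) ^ 2 = π ^ 2 / 6 := by simp
    rw [h0] at h
    have heq : (fun k : ℕ => 1 / ((k : ℝ) + 1) ^ 2) = fun n : ℕ => 1 / ((n + 1 : ℕ) : ℝ) ^ 2 := by
      funext n; push_cast; ring
    rw [heq]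
    exact h
  exact h'.tsum_eq

lemma lim_tsum :
    Tendsto (fun l : ℝ => ∑' k : ℕ, l ^ (k + 1) * (1 - l) ^ 2 / (1 - l ^ (k + 1)) ^ 2)
      (nhdsWithin 1 (Set.Ioo 0 1)) (nhds (π ^ 2 / 6)) := by
  rw [← tsum_inv_sq]
  apply tendsto_tsum_of_dominated_convergence summable_bound
  · -- pointwise limits
    intro k
    set n := k + 1 with hn
    have hcont : Tendsto (fun l : ℝ => l ^ n / (∑ j ∈ Finset.range n, l ^ j) ^ 2)
        (nhds 1) (nhds (1 / ((k : ℝ) + 1) ^ 2)) := by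
      have hc : ContinuousAt (fun l : ℝ => l ^ n / (∑ j ∈ Finset.range n, l ^ j) ^ 2) 1 := by
        apply ContinuousAt.div (by fun_prop) (by fun_prop)
        simp [Finset.sum_const, Finset.card_range]
      have hval : ((1 : ℝ) ^ n / (∑ j ∈ Finset.range n, (1:ℝ) ^ j) ^ 2) = 1 / ((k : ℝ) + 1) ^ 2 := by
        simp [Finset.sum_const, Finset.card_range, hn]
      convert hc.tendsto using 2
      exact hval.symm
    refine Tendsto.congr' ?_ (hcont.mono_left nhdsWithin_le_nhds)
    filter_upwards [self_mem_nhdsWithin] with l hl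
    obtain ⟨hl0, hl1⟩ := hl
    have hgeom : 1 - l ^ n = (1 - l) * ∑ j ∈ Finset.range n, l ^ j := by
      have := geom_sum_mul l n
      linarith
    have hSpos : 0 < ∑ j ∈ Finset.range n, l ^ j := by
      have h1n := pos_one_sub_pow hl0 hl1 k
      have hll : (0:ℝ) < 1 - l := by linarith
      nlinarith [hgeom]
    have hl' : (1 : ℝ) - l ≠ 0 := by intro h; rw [sub_eq_zero] at h; exact absurd h.symm (ne_of_lt hl1)
    rw [hgeom]
    field_simp
  · -- bound
    filter_upwards [self_mem_nhdsWithin] with l hl k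
    obtain ⟨hl0, hl1⟩ := hl
    rw [Real.norm_eq_abs, abs_of_nonneg]
    · exact term_bound hl0 hl1 k
    · have := pos_one_sub_pow hl0 hl1 k
      positivity

open Filter Real in
/-- As `λ → 1⁻`,
`(1-λ)³ · (λ(6+λ+λ²)/(1-λ)³ - 4T₁(λ)/(1-λ)) → 8 - 4ζ(2) = 8 - 2π²/3`,
where `T₁(λ) = ∑_{i≥1} iλ^i/(1-λ^i)`. -/
theorem fos_waiting_time_variance_asymptotic :
    Tendsto
      (fun lam : ℝ => (1 - lam) ^ 3 *
        (lam * (6 + lam + lam ^ 2) / (1 - lam) ^ 3 -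
          4 * (∑' i : ℕ, ((i + 1 : ℕ) : ℝ) * lam ^ (i + 1) / (1 - lam ^ (i + 1))) / (1 - lam)))
      (nhdsWithin 1 (Set.Ioo 0 1)) (nhds (8 - 2 * π ^ 2 / 3)) := by
  have heq : ∀ᶠ l in nhdsWithin 1 (Set.Ioo 0 1),
      (fun l : ℝ => l * (6 + l + l ^ 2) -
        4 * ∑' k : ℕ, l ^ (k + 1) * (1 - l) ^ 2 / (1 - l ^ (k + 1)) ^ 2) l =
      (1 - l) ^ 3 *
        (l * (6 + l + l ^ 2) / (1 - l) ^ 3 -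
          4 * (∑' i : ℕ, ((i + 1 : ℕ) : ℝ) * l ^ (i + 1) / (1 - l ^ (i + 1))) / (1 - l)) := by
    filter_upwards [self_mem_nhdsWithin] with l hl
    obtain ⟨h0, h1⟩ := hl
    rw [key_swap h0 h1]
    have hts : ∑' k : ℕ, l ^ (k + 1) * (1 - l) ^ 2 / (1 - l ^ (k + 1)) ^ 2
        = (1 - l) ^ 2 * ∑' k : ℕ, l ^ (k + 1) / (1 - l ^ (k + 1)) ^ 2 := by
      rw [← tsum_mul_left]
      apply tsum_congr
      intro k; ring
    rw [hts]
    have hl' : (1 : ℝ) - l ≠ 0 := by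
      intro h; rw [sub_eq_zero] at h; exact absurd h.symm (ne_of_lt h1)
    field_simp
  have hA : Tendsto (fun l : ℝ => l * (6 + l + l ^ 2)) (nhdsWithin 1 (Set.Ioo 0 1)) (nhds 8) := by
    have hc : ContinuousAt (fun l : ℝ => l * (6 + l + l ^ 2)) 1 := by fun_prop
    have h := hc.tendsto.mono_left (nhdsWithin_le_nhds (s := Set.Ioo 0 1))
    convert h using 2
    norm_num
  have hB := lim_tsum.const_mul (4 : ℝ)
  have hsub := hA.sub hB
  have hval : (8 : ℝ) - 4 * (π ^ 2 / 6) = 8 - 2 * π ^ 2 / 3 := by ring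
  rw [hval] at hsub
  exact Tendsto.congr' heq hsub
end
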